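/- arXiv:2512.24236 — 5 statements merged into one kernel-verified Lean document; each statement's English description precedes it below -/
import Mathlib

section
/- Let v ∈ ℂ² be a column vector and w ∈ (ℂ²)* a row vector with w(v) = 0, and define the matrix-valued map 𝔄(λ) := −λ⁻¹(v·w)₀ + (v·vᴴ − wᴴ·w)₀ + λ·((v·w)₀)ᴴ for λ ∈ ℂ∖{0}. Then for every λ ∈ ℂ∖{0}: (a) tr 𝔄(λ) = 0; (b) det 𝔄(λ) = −((|v|² − |w|²)/2)²; (c) the reality condition (𝔄(−1/λ̄))ᴴ = 𝔄(λ) holds (equivalently 𝔄* = −𝔄); (d) the λ⁻¹-coefficient annihilates v, i.e. (v·w)₀ · v = 0. -/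
open Complex ComplexConjugate Matrix

noncomputable section

def tl (M : Matrix (Fin 2) (Fin 2) ℂ) : Matrix (Fin 2) (Fin 2) ℂ :=
  M - (M.trace / 2) • (1 : Matrix (Fin 2) (Fin 2) ℂ)

def outer (v w : Fin 2 → ℂ) : Matrix (Fin 2) (Fin 2) ℂ :=
  Matrix.of fun i j => v i * w j

def vvH (v : Fin 2 → ℂ) : Matrix (Fin 2) (Fin 2) ℂ :=
  Matrix.of fun i j => v i * conj (v j)

def wHw (w : Fin 2 → ℂ) : Matrix (Fin 2) (Fin 2) ℂ :=
  Matrix.of fun i j => conj (w i) * w j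

def frakA (v w : Fin 2 → ℂ) (l : ℂ) : Matrix (Fin 2) (Fin 2) ℂ :=
  -(l⁻¹ • tl (outer v w)) + tl (vvH v - wHw w) + l • (tl (outer v w))ᴴ

lemma tl_conjTranspose (M : Matrix (Fin 2) (Fin 2) ℂ)
    (hM : Mᴴ = M) (htr : conj M.trace = M.trace) : (tl M)ᴴ = tl M := by
  unfold tl
  rw [Matrix.conjTranspose_sub, Matrix.conjTranspose_smul, Matrix.conjTranspose_one, hM]
  congr 1
  rw [Complex.star_def, map_div₀, htr, map_ofNat]

lemma Q_herm (v w : Fin 2 → ℂ) : (tl (vvH v - wHw w))ᴴ = tl (vvH v - wHw w) := by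
  apply tl_conjTranspose
  · ext i j
    simp only [Matrix.conjTranspose_apply, Matrix.sub_apply, vvH, wHw, Matrix.of_apply,
      Complex.star_def, map_sub, _root_.map_mul, Complex.conj_conj]
    ring
  · simp only [Matrix.trace_fin_two, Matrix.sub_apply, vvH, wHw, Matrix.of_apply,
      _root_.map_add, map_sub, _root_.map_mul, Complex.conj_conj]
    ring

/-- If `w(v) = 0` then for every `λ ≠ 0`: `𝔄(λ)` is traceless, has determinant
`−((|v|² − |w|²)/2)²`, satisfies the reality condition `(𝔄(−1/λ̄))ᴴ = 𝔄(λ)`, and its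
`λ⁻¹`-coefficient annihilates `v`. -/
theorem stmt4 (v w : Fin 2 → ℂ) (hvw : (∑ i, w i * v i) = 0) :
    ∀ l : ℂ, l ≠ 0 →
      (frakA v w l).trace = 0 ∧
      (frakA v w l).det
        = -((((∑ i, Complex.normSq (v i)) - ∑ i, Complex.normSq (w i)) / 2 : ℝ) : ℂ) ^ 2 ∧
      (frakA v w (-(1 / conj l)))ᴴ = frakA v w l ∧
      (tl (outer v w)).mulVec v = 0 := by
  intro l hl
  have hS : w 0 * v 0 + w 1 * v 1 = 0 := by simpa [Fin.sum_univ_two] using hvw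
  have hSc : conj (w 0) * conj (v 0) + conj (w 1) * conj (v 1) = 0 := by
    have := congrArg conj hS
    simpa [_root_.map_add, _root_.map_mul] using this
  have hcl : conj l ≠ 0 := by simpa using hl
  refine ⟨?_, ?_, ?_, ?_⟩
  · simp [frakA, tl, Matrix.trace_fin_two, Matrix.of_apply, outer, vvH, wHw,
      Matrix.add_apply, Matrix.sub_apply, Matrix.smul_apply, Matrix.neg_apply,
      Matrix.one_apply, Matrix.conjTranspose_apply, smul_eq_mul]
  · have hμ : l * l⁻¹ = 1 := mul_inv_cancel₀ hl
    simp only [frakA, tl, Matrix.det_fin_two, Matrix.trace_fin_two,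
      Matrix.add_apply, Matrix.sub_apply, Matrix.smul_apply, Matrix.neg_apply,
      Matrix.one_apply, Matrix.conjTranspose_apply, outer, vvH, wHw,
      Matrix.of_apply, smul_eq_mul, Fin.sum_univ_two, Complex.star_def]
    push_cast [← Complex.mul_conj]
    simp only [Fin.isValue, if_true, if_false, Fin.zero_eq_one_iff, Fin.one_eq_zero_iff,
      Nat.succ_ne_self, mul_one, mul_zero, _root_.map_mul, map_sub, map_add, map_neg,
      map_inv₀, Complex.conj_conj, map_div₀, _root_.map_one, map_ofNat, map_zero, sub_zero]
    set a := v 0; set b := v 1; set c := w 0; set d := w 1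
    set a' := conj (v 0); set b' := conj (v 1); set c' := conj (w 0); set d' := conj (w 1)
    linear_combination (l⁻¹ * ((a*a' + b*b' - c*c' - d*d')/2)) * hS
      + (l * ((a*a' + b*b' - c*c' - d*d')/2)) * hSc
      + (-a*c*b'*d' - b*d*a'*c' + a*d*a'*d' + b*c*b'*c') * hμ
      + ((1/2)*l*l⁻¹*(c'*a'+d'*b') - (1/4)*l⁻¹^2*(c*a+d*b)) * hS
      + (-l*(a*a' + b*b' - c*c' - d*d') - (1/4)*l^2*(c'*a'+d'*b')) * hSc
  · have h1 : conj (-(1 / conj l)) = -l⁻¹ := by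
      rw [map_neg, map_div₀, _root_.map_one, Complex.conj_conj, one_div]
    have h2 : conj ((-(1 / conj l))⁻¹) = -l := by
      rw [map_inv₀, h1, inv_neg, inv_inv]
    unfold frakA
    rw [Matrix.conjTranspose_add, Matrix.conjTranspose_add, Matrix.conjTranspose_neg,
      Matrix.conjTranspose_smul, Matrix.conjTranspose_smul, Matrix.conjTranspose_conjTranspose,
      Q_herm]
    simp only [Complex.star_def]
    rw [h2, h1]
    module
  · have : tl (outer v w) = outer v w - ((outer v w).trace / 2) • 1 := rfl
    rw [this, Matrix.sub_mulVec, Matrix.smul_mulVec, Matrix.one_mulVec]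
    funext i
    simp only [Pi.sub_apply, Pi.smul_apply, Pi.zero_apply, smul_eq_mul,
      Matrix.mulVec, dotProduct, Fin.sum_univ_two, outer, Matrix.of_apply,
      Matrix.trace_fin_two]
    linear_combination (v i / 2) * hS
end
end

section
/- Let α > 0, (x,y) ∈ ℂ²∖{(0,0)}, s := |x|² + |y|², a := √((2α + s)/s), and set v := a·(x, y)ᵀ (a column vector) and w := (y, −x) (a row vector). Then w(v) = 0 and |v|² − |w|² = 2α; consequently, the associated map 𝔄(λ) := −λ⁻¹(v·w)₀ + (v·vᴴ − wᴴ·w)₀ + λ·((v·w)₀)ᴴ satisfies det 𝔄(λ) = −α² and tr 𝔄(λ) = 0 for all λ ∈ ℂ∖{0}, and (𝔄(−1/λ̄))ᴴ = 𝔄(λ). -/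
open Complex ComplexConjugate Matrix

noncomputable section

lemma tl_fin (A B C D : ℂ) : tl !![A, B; C, D] = !![(A - D)/2, B; C, (D - A)/2] := by
  ext i j
  fin_cases i <;> fin_cases j <;>
    simp [tl, Matrix.trace_fin_two, Matrix.one_apply, Matrix.sub_apply, Matrix.smul_apply] <;>
    ring

set_option maxHeartbeats 1000000 in
/-- For `α > 0`, `(x,y) ≠ (0,0)`, `s = |x|² + |y|²`, `a = √((2α+s)/s)`, `v = a·(x,y)ᵀ`,
`w = (y,−x)`: one has `w(v) = 0` and `|v|² − |w|² = 2α`; consequently the associated loop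
`𝔄` satisfies `det 𝔄(λ) = −α²`, `tr 𝔄(λ) = 0` and the reality condition
`(𝔄(−1/λ̄))ᴴ = 𝔄(λ)` for all `λ ≠ 0`. -/
theorem stmt5 (α : ℝ) (hα : 0 < α) (x y : ℂ) (hxy : (x, y) ≠ (0, 0)) :
    let s : ℝ := Complex.normSq x + Complex.normSq y
    let a : ℝ := Real.sqrt ((2 * α + s) / s)
    let v : Fin 2 → ℂ := ![(a : ℂ) * x, (a : ℂ) * y]
    let w : Fin 2 → ℂ := ![y, -x]
    (∑ i, w i * v i) = 0 ∧
    ((∑ i, Complex.normSq (v i)) - ∑ i, Complex.normSq (w i)) = 2 * α ∧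
    ∀ l : ℂ, l ≠ 0 →
      (frakA v w l).det = -(α : ℂ) ^ 2 ∧
      (frakA v w l).trace = 0 ∧
      (frakA v w (-(1 / conj l)))ᴴ = frakA v w l := by

  intro s a v w
  have hxy' : ¬(x = 0 ∧ y = 0) := by
    intro ⟨h1, h2⟩; exact hxy (by simp [h1, h2])
  have hs : 0 < s := by
    rcases Classical.em (x = 0) with h | h
    · have : y ≠ 0 := fun hy => hxy' ⟨h, hy⟩
      have := Complex.normSq_pos.mpr this
      have := Complex.normSq_nonneg x
      simp only [s]; linarith
    · have := Complex.normSq_pos.mpr h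
      have := Complex.normSq_nonneg y
      simp only [s]; linarith
  have ha2 : a ^ 2 = (2 * α + s) / s := Real.sq_sqrt (by positivity)
  have ha2s : a ^ 2 * s = 2 * α + s := by
    rw [ha2]; field_simp
  have hcx : x * conj x = (Complex.normSq x : ℂ) := Complex.mul_conj x
  have hcy : y * conj y = (Complex.normSq y : ℂ) := Complex.mul_conj y
  have hca : (a : ℂ) ^ 2 * (x * conj x + y * conj y) = 2 * α + (x * conj x + y * conj y) := by
    rw [hcx, hcy]
    have h := ha2s
    simp only [s] at h
    exact_mod_cast h
  set ax : ℂ := (a : ℂ) with hax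
  set cx : ℂ := conj x with hcx'
  set cy : ℂ := conj y with hcy'
  have h1 : outer v w = !![ax*x*y, -(ax*x^2); ax*y^2, -(ax*x*y)] := by
    ext i j
    fin_cases i <;> fin_cases j <;> simp [outer, v, w, hax] <;> ring
  have h2 : tl (outer v w) = !![ax*x*y, -(ax*x^2); ax*y^2, -(ax*x*y)] := by
    rw [h1, tl_fin]
    congr 1 <;> ring
  have h3 : (tl (outer v w))ᴴ = !![ax*cx*cy, ax*cy^2; -(ax*cx^2), -(ax*cx*cy)] := by
    rw [h2]
    ext i j
    fin_cases i <;> fin_cases j <;>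
      simp [Matrix.conjTranspose_apply, hax, hcx', hcy', Complex.conj_ofReal, _root_.map_mul] <;> ring
  have h4 : vvH v - wHw w = !![ax^2*x*cx - cy*y, ax^2*x*cy + cy*x;
      ax^2*y*cx + cx*y, ax^2*y*cy - cx*x] := by
    ext i j
    fin_cases i <;> fin_cases j <;>
      simp [vvH, wHw, v, w, hax, hcx', hcy', Complex.conj_ofReal, _root_.map_mul, map_neg] <;> ring
  have h5 : tl (vvH v - wHw w) = !![ax^2*x*cx - cy*y - α, ax^2*x*cy + cy*x;
      ax^2*y*cx + cx*y, ax^2*y*cy - cx*x - α] := by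
    rw [h4, tl_fin]
    have e1 : (ax^2*x*cx - cy*y - (ax^2*y*cy - cx*x))/2 = ax^2*x*cx - cy*y - α := by
      linear_combination (-(1/2) : ℂ) * hca
    have e2 : (ax^2*y*cy - cx*x - (ax^2*x*cx - cy*y))/2 = ax^2*y*cy - cx*x - α := by
      linear_combination (-(1/2) : ℂ) * hca
    rw [e1, e2]
  have hAl : ∀ l : ℂ, frakA v w l =
      !![-(l⁻¹ * (ax*x*y)) + (ax^2*x*cx - cy*y - α) + l * (ax*cx*cy),
         l⁻¹ * (ax*x^2) + (ax^2*x*cy + cy*x) + l * (ax*cy^2);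
         -(l⁻¹ * (ax*y^2)) + (ax^2*y*cx + cx*y) - l * (ax*cx^2),
         l⁻¹ * (ax*x*y) + (ax^2*y*cy - cx*x - α) - l * (ax*cx*cy)] := by
    intro l
    rw [frakA, h5, h3, h2]
    ext i j
    fin_cases i <;> fin_cases j <;>
      simp [Matrix.add_apply, Matrix.neg_apply, Matrix.smul_apply, smul_eq_mul] <;> ring
  refine ⟨?_, ?_, ?_⟩
  · simp [v, w, Fin.sum_univ_two]; ring
  · simp only [v, w, Fin.sum_univ_two, Matrix.cons_val_zero, Matrix.cons_val_one,
      Matrix.head_cons, Complex.normSq_mul, Complex.normSq_neg, Complex.normSq_ofReal]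
    simp only [s] at ha2s
    nlinarith [ha2s]
  · intro l hl
    have hlc : conj l ≠ 0 := by simpa using hl
    refine ⟨?_, ?_, ?_⟩
    · rw [hAl l, Matrix.det_fin_two_of]
      linear_combination (-(α : ℂ)) * hca +
        (ax ^ 2 * (x * cx + y * cy) ^ 2) * mul_inv_cancel₀ hl
    · rw [hAl l, Matrix.trace_fin_two]
      simp
      linear_combination hca
    · rw [hAl l, hAl (-(1 / conj l))]
      ext i j
      fin_cases i <;> fin_cases j <;>
        · simp [Matrix.conjTranspose_apply, Fin.isValue, Matrix.cons_val', Matrix.cons_val_zero,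
            Matrix.cons_val_one, Matrix.head_cons, Matrix.head_fin_const, Matrix.empty_val',
            Matrix.cons_val_fin_one, Matrix.of_apply, star_add, star_sub, star_neg, star_mul',
            star_inv₀, RCLike.star_def, _root_.map_mul, map_neg, map_add, map_sub, map_div₀, _root_.map_one,
            map_inv₀, map_pow, Complex.conj_conj, hax, Complex.conj_ofReal, hcx', hcy', inv_neg, inv_inv, one_div]
          ring
end
end

section
/- Let α > 0 and (x,y) ∈ ℂ²∖{(0,0)}, s := |x|² + |y|². The matrix M := (α/s)·[[|x|² − |y|², 2x·conj(y)], [2y·conj(x), |y|² − |x|²]] satisfies: Mᴴ = M, tr M = 0, det M = −α², and M·(x,y)ᵀ = α·(x,y)ᵀ. Moreover, for r > 0 set a_r := √((2α + r²s)/s), v_r := a_r·(x,y)ᵀ, w_r := r·(y, −x), and let 𝔄_r(λ) := −λ⁻¹(v_r·w_r)₀ + (v_r·v_rᴴ − w_rᴴ·w_r)₀ + λ·((v_r·w_r)₀)ᴴ. Then for each fixed λ ∈ ℂ∖{0}, 𝔄_r(λ) → M as r → 0⁺. -/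
open Complex ComplexConjugate Matrix

noncomputable section

/-- The limiting matrix `M = (α/s)·[[|x|²−|y|², 2x·conj y],[2y·conj x, |y|²−|x|²]]` is
Hermitian, traceless, has determinant `−α²` and eigenvector `(x,y)ᵀ` with eigenvalue `α`;
moreover the loops `𝔄_r(λ)` built from `v_r = √((2α+r²s)/s)·(x,y)ᵀ`, `w_r = r·(y,−x)`
converge entrywise to `M` as `r → 0⁺`, for each fixed `λ ≠ 0`. -/
theorem stmt6 (α : ℝ) (hα : 0 < α) (x y : ℂ) (hxy : (x, y) ≠ (0, 0)) :
    let s : ℝ := Complex.normSq x + Complex.normSq y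
    let M : Matrix (Fin 2) (Fin 2) ℂ := ((α / s : ℝ) : ℂ) •
      !![((Complex.normSq x - Complex.normSq y : ℝ) : ℂ), 2 * x * conj y;
         2 * y * conj x, ((Complex.normSq y - Complex.normSq x : ℝ) : ℂ)]
    Mᴴ = M ∧ M.trace = 0 ∧ M.det = -(α : ℂ) ^ 2 ∧
    M.mulVec ![x, y] = (α : ℂ) • ![x, y] ∧
    ∀ l : ℂ, l ≠ 0 → ∀ i j : Fin 2,
      Filter.Tendsto
        (fun r : ℝ =>
          frakA (fun i' => (Real.sqrt ((2 * α + r ^ 2 * s) / s) : ℂ) * ![x, y] i')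
                (fun i' => (r : ℂ) * ![y, -x] i') l i j)
        (nhdsWithin 0 (Set.Ioi 0)) (nhds (M i j)) := by
  intro s M
  have hs : 0 < s := by
    rcases (not_and_or.mp (fun h => hxy (Prod.ext h.1 h.2))) with h | h
    · exact add_pos_of_pos_of_nonneg (normSq_pos.mpr h) (normSq_nonneg y)
    · exact add_pos_of_nonneg_of_pos (normSq_nonneg x) (normSq_pos.mpr h)
  have hs' : (s : ℂ) ≠ 0 := by exact_mod_cast ne_of_gt hs
  have h1 : x * conj x = (Complex.normSq x : ℂ) := Complex.mul_conj x
  have h2 : y * conj y = (Complex.normSq y : ℂ) := Complex.mul_conj y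
  have hss : s = Complex.normSq x + Complex.normSq y := rfl
  refine ⟨?_, ?_, ?_, ?_, ?_⟩
  · ext i j
    fin_cases i <;> fin_cases j <;>
      simp [M, Matrix.conjTranspose_apply, _root_.map_mul, Complex.conj_ofReal] <;> exact Or.inl (by ring)
  · simp [M, Matrix.trace_fin_two]
    ring
  · have hsc : ((Complex.normSq x : ℂ) + (Complex.normSq y : ℂ)) ≠ 0 := by
      rw [hss] at hs'; push_cast at hs'; exact hs'
    show (((α / s : ℝ) : ℂ) • _ : Matrix (Fin 2) (Fin 2) ℂ).det = _
    simp only [Matrix.det_fin_two, Matrix.smul_apply, Matrix.cons_val', Matrix.cons_val_zero,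
      Matrix.cons_val_one, Matrix.head_cons, Matrix.head_fin_const, Matrix.empty_val',
      Matrix.cons_val_fin_one, smul_eq_mul, Matrix.of_apply]
    push_cast [hss]
    field_simp
    linear_combination (-4*(α:ℂ)^2) * ((y * conj y) * h1 + ((Complex.normSq x : ℂ)) * h2)
  · funext i
    fin_cases i <;>
    · simp only [M, Matrix.mulVec, dotProduct, Fin.sum_univ_two, Matrix.smul_apply,
        Matrix.cons_val', Matrix.cons_val_zero, Matrix.cons_val_one, Matrix.head_cons,
        Matrix.head_fin_const, Matrix.empty_val', Matrix.cons_val_fin_one, smul_eq_mul,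
        Pi.smul_apply, Fin.isValue, Fin.zero_eta, Fin.mk_one, Matrix.of_apply]
      push_cast [hss]
      have hsc : ((Complex.normSq x : ℂ) + (Complex.normSq y : ℂ)) ≠ 0 := by
        rw [hss] at hs'; push_cast at hs'; exact hs'
      field_simp [hsc]
      first
      | linear_combination (2 * (α:ℂ) * x) * h2
      | linear_combination (2 * (α:ℂ) * y) * h1
  · intro l hl i j
    have hA : ((Real.sqrt ((2 * α + (0:ℝ) ^ 2 * s) / s) : ℝ) : ℂ) ^ 2 = 2 * (α:ℂ) / (s:ℂ) := by
      rw [← Complex.ofReal_pow, Real.sq_sqrt (by positivity)]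
      push_cast
      norm_num
    have key : ContinuousAt (fun r : ℝ =>
          frakA (fun i' => (Real.sqrt ((2 * α + r ^ 2 * s) / s) : ℂ) * ![x, y] i')
                (fun i' => (r : ℂ) * ![y, -x] i') l i j) 0 := by
      fin_cases i <;> fin_cases j <;>
      · simp only [frakA, tl, outer, vvH, wHw, Matrix.trace_fin_two, Matrix.conjTranspose_apply,
          Matrix.sub_apply, Matrix.add_apply, Matrix.neg_apply, Matrix.smul_apply,
          Matrix.of_apply, Matrix.one_apply, Matrix.cons_val_zero, Matrix.cons_val_one,
          Matrix.head_cons, smul_eq_mul, _root_.map_mul, Complex.conj_ofReal, map_neg,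
          Matrix.head_fin_const, Matrix.cons_val', Matrix.empty_val', Matrix.cons_val_fin_one,
          Fin.isValue, if_true, if_false, Fin.zero_eta, Fin.mk_one, mul_one, mul_zero]
        fun_prop
    have h0 : (fun r : ℝ =>
          frakA (fun i' => (Real.sqrt ((2 * α + r ^ 2 * s) / s) : ℂ) * ![x, y] i')
                (fun i' => (r : ℂ) * ![y, -x] i') l i j) 0 = M i j := by
      fin_cases i <;> fin_cases j <;>
      · simp only [M, frakA, tl, outer, vvH, wHw, Matrix.trace_fin_two,
          Matrix.conjTranspose_apply, Matrix.sub_apply, Matrix.add_apply, Matrix.neg_apply,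
          Matrix.smul_apply, Matrix.of_apply, Matrix.one_apply, Matrix.cons_val_zero,
          Matrix.cons_val_one, Matrix.head_cons, smul_eq_mul, _root_.map_mul,
          Complex.conj_ofReal, map_neg, Matrix.head_fin_const, Matrix.cons_val',
          Matrix.empty_val', Matrix.cons_val_fin_one, Fin.isValue, Fin.zero_eta, Fin.mk_one,
          Complex.ofReal_zero, mul_zero, zero_mul, mul_one, neg_zero, sub_zero, add_zero,
          zero_add, mul_neg, neg_neg, if_true, if_false, zero_div, star_zero, sub_self]
        push_cast
        first
        | linear_combination ((x * conj x - y * conj y) / 2) * hA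
            + ((α:ℂ)/(s:ℂ)) * h1 - ((α:ℂ)/(s:ℂ)) * h2
        | linear_combination (x * conj y) * hA
        | linear_combination (y * conj x) * hA
        | linear_combination ((y * conj y - x * conj x) / 2) * hA
            - ((α:ℂ)/(s:ℂ)) * h1 + ((α:ℂ)/(s:ℂ)) * h2
    exact h0 ▸ key.tendsto.mono_left nhdsWithin_le_nhds
end
end

section
/- Let α > 0, β ∈ ℂ, μ := i√(α² + |β|²), and define 𝔛(λ) := λ⁻¹·β·E₁₂ + diag(μ, −μ) + λ·conj(β)·E₂₁ for λ ∈ ℂ∖{0}. Then: (a) det 𝔛(λ) = α² for all λ ∈ ℂ∖{0}; (b) the reality condition (𝔛(−1/λ̄))ᴴ = −𝔛(λ) holds for all λ ∈ ℂ∖{0}; (c) the monodromy matrix exp(2π·𝔛(λ)) is loop-unitary: (exp(2π·𝔛(−1/λ̄)))ᴴ · exp(2π·𝔛(λ)) = I for all λ ∈ ℂ∖{0}. -/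
open Complex ComplexConjugate Matrix

noncomputable section

/-- The loop `𝔛(λ) = λ⁻¹·β·E₁₂ + diag(μ, −μ) + λ·conj(β)·E₂₁` with
`μ = i√(α² + |β|²)`. -/
def frakX (α : ℝ) (β : ℂ) (l : ℂ) : Matrix (Fin 2) (Fin 2) ℂ :=
  l⁻¹ • (β • !![0, 1; 0, 0])
    + !![Complex.I * ((Real.sqrt (α ^ 2 + Complex.normSq β) : ℝ) : ℂ), 0;
         0, -(Complex.I * ((Real.sqrt (α ^ 2 + Complex.normSq β) : ℝ) : ℂ))]
    + l • ((conj β) • !![0, 0; 1, 0])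

lemma frakX_eq (α : ℝ) (β : ℂ) (l : ℂ) :
    frakX α β l = !![Complex.I * ((Real.sqrt (α ^ 2 + Complex.normSq β) : ℝ) : ℂ), l⁻¹ * β;
      l * conj β, -(Complex.I * ((Real.sqrt (α ^ 2 + Complex.normSq β) : ℝ) : ℂ))] := by
  ext i j
  fin_cases i <;> fin_cases j <;> simp [frakX] <;> ring

/-- For `α > 0` and `β ∈ ℂ`: (a) `det 𝔛(λ) = α²`; (b) the reality condition
`(𝔛(−1/λ̄))ᴴ = −𝔛(λ)`; (c) the monodromy `exp(2π𝔛)` is loop-unitary. -/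
theorem stmt10 (α : ℝ) (hα : 0 < α) (β : ℂ) :
    ∀ l : ℂ, l ≠ 0 →
      (frakX α β l).det = (α : ℂ) ^ 2 ∧
      (frakX α β (-(1 / conj l)))ᴴ = -frakX α β l ∧
      (NormedSpace.exp (((2 * Real.pi : ℝ) : ℂ) • frakX α β (-(1 / conj l))))ᴴ
          * NormedSpace.exp (((2 * Real.pi : ℝ) : ℂ) • frakX α β l) = 1 := by
  intro l hl
  have hl' : conj l ≠ 0 := by simpa using hl
  have hsq : ((Real.sqrt (α ^ 2 + Complex.normSq β) : ℝ) : ℂ) ^ 2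
      = (α : ℂ) ^ 2 + (Complex.normSq β : ℂ) := by
    rw [← Complex.ofReal_pow, Real.sq_sqrt (add_nonneg (sq_nonneg α) (Complex.normSq_nonneg β))]
    push_cast; ring
  have hli : l⁻¹ * l = 1 := inv_mul_cancel₀ hl
  have hm : β * conj β = (Complex.normSq β : ℂ) := Complex.mul_conj β
  have ha : (frakX α β l).det = (α : ℂ) ^ 2 := by
    rw [frakX_eq, Matrix.det_fin_two_of]
    linear_combination hsq - ((Real.sqrt (α ^ 2 + Complex.normSq β) : ℝ) : ℂ) ^ 2 * Complex.I_sq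
      - β * conj β * hli - hm
  have hb : (frakX α β (-(1 / conj l)))ᴴ = -frakX α β l := by
    rw [frakX_eq, frakX_eq]
    ext i j
    fin_cases i <;> fin_cases j <;>
      simp [Matrix.conjTranspose_apply, Complex.conj_I] <;>
      field_simp <;> ring
  refine ⟨ha, hb, ?_⟩
  have key : (((2 * Real.pi : ℝ) : ℂ) • frakX α β (-(1 / conj l)))ᴴ
      = -(((2 * Real.pi : ℝ) : ℂ) • frakX α β l) := by
    rw [Matrix.conjTranspose_smul, hb]
    simp [Complex.conj_ofReal, smul_neg]
  calc (NormedSpace.exp (((2 * Real.pi : ℝ) : ℂ) • frakX α β (-(1 / conj l))))ᴴ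
        * NormedSpace.exp (((2 * Real.pi : ℝ) : ℂ) • frakX α β l)
      = NormedSpace.exp ((((2 * Real.pi : ℝ) : ℂ) • frakX α β (-(1 / conj l)))ᴴ)
        * NormedSpace.exp (((2 * Real.pi : ℝ) : ℂ) • frakX α β l) := by
        rw [Matrix.exp_conjTranspose]
    _ = NormedSpace.exp (-(((2 * Real.pi : ℝ) : ℂ) • frakX α β l))
        * NormedSpace.exp (((2 * Real.pi : ℝ) : ℂ) • frakX α β l) := by rw [key]
    _ = NormedSpace.exp (-(((2 * Real.pi : ℝ) : ℂ) • frakX α β l)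
        + (((2 * Real.pi : ℝ) : ℂ) • frakX α β l)) := by
        exact (Matrix.exp_add_of_commute _ _ ((Commute.refl (((2 * Real.pi : ℝ) : ℂ) • frakX α β l)).neg_left)).symm
    _ = 1 := by rw [neg_add_cancel, NormedSpace.exp_zero]
end
end

section
/- Let α > 0, β ∈ ℂ, and let 𝔛, Λ, K_𝔛 be as in the ℓ¹-model of the loop algebra. Then for every Y ∈ K_𝔛 there exists Ŷ ∈ Λ with [𝔛, Ŷ] = Y, where the bracket is the convolution bracket ([𝔛,Ŷ])_k = Σ_j [𝔛_j, Ŷ_{k−j}]. Moreover Ŷ is unique up to adding f·𝔛 for a summable scalar sequence f ∈ ℓ¹(ℤ, ℂ) (acting by convolution, (f·𝔛)_k = Σ_j f_j 𝔛_{k−j}), and the assignment Y ↦ Ŷ can be chosen to be a continuous linear map. -/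
open Complex ComplexConjugate Matrix

noncomputable section

attribute [local instance] Matrix.normedAddCommGroup

attribute [local instance] Matrix.normedSpace

/-- Membership in the ℓ¹-model `Λ` of the Wiener loop algebra `Λsl(2,ℂ)`:
absolutely summable coefficients, all traceless. -/
def memL (ξ : ℤ → Matrix (Fin 2) (Fin 2) ℂ) : Prop :=
  Summable (fun k => ‖ξ k‖) ∧ ∀ k, (ξ k).trace = 0

/-- The loop `𝔛` with coefficients `𝔛₋₁ = β·E₁₂`, `𝔛₀ = diag(μ,−μ)` (`μ = i√(α²+|β|²)`),
`𝔛₁ = conj(β)·E₂₁`, and `𝔛_k = 0` otherwise. -/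
def XX (α : ℝ) (β : ℂ) : ℤ → Matrix (Fin 2) (Fin 2) ℂ := fun k =>
  if k = -1 then β • !![0, 1; 0, 0]
  else if k = 0 then
    !![Complex.I * ((Real.sqrt (α ^ 2 + Complex.normSq β) : ℝ) : ℂ), 0;
       0, -(Complex.I * ((Real.sqrt (α ^ 2 + Complex.normSq β) : ℝ) : ℂ))]
  else if k = 1 then (conj β) • !![0, 0; 1, 0]
  else 0

/-- The condition `tr(𝔛ξ) = 0`, coefficient by coefficient. -/
def Kcond (α : ℝ) (β : ℂ) (ξ : ℤ → Matrix (Fin 2) (Fin 2) ℂ) : Prop :=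
  ∀ k : ℤ, (XX α β (-1) * ξ (k + 1)).trace + (XX α β 0 * ξ k).trace
      + (XX α β 1 * ξ (k - 1)).trace = 0

/-- The convolution bracket `([𝔛, Ŷ])_k = Σ_j [𝔛_j, Ŷ_{k−j}]`, which reduces to three
terms since `𝔛` is supported on `{−1, 0, 1}`. -/
def brX (α : ℝ) (β : ℂ) (Y : ℤ → Matrix (Fin 2) (Fin 2) ℂ) :
    ℤ → Matrix (Fin 2) (Fin 2) ℂ := fun k =>
  (XX α β (-1) * Y (k + 1) - Y (k + 1) * XX α β (-1))
    + (XX α β 0 * Y k - Y k * XX α β 0)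
    + (XX α β 1 * Y (k - 1) - Y (k - 1) * XX α β 1)

/-! ### Auxiliary material -/

/-- The convolution trace sequence `m ↦ (tr(𝔛 Y))_m`. -/
def Tr (α : ℝ) (β : ℂ) (Y : ℤ → Matrix (Fin 2) (Fin 2) ℂ) (m : ℤ) : ℂ :=
  (XX α β (-1) * Y (m + 1)).trace + (XX α β 0 * Y m).trace
    + (XX α β 1 * Y (m - 1)).trace

set_option maxHeartbeats 2000000 in
/-- The core algebraic identity: `ad_𝔛² Y = -4α² Y - 2 tr(𝔛Y)·𝔛`, one coefficient at a
time, for generic traceless matrices. -/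
lemma matkey (αc β γ μ : ℂ) (hrel : μ^2 = -(αc^2 + β*γ))
    (a1 b1 c1 a2 b2 c2 a3 b3 c3 a4 b4 c4 a5 b5 c5 : ℂ)
    (X1 X2 X3 A B C D E : Matrix (Fin 2) (Fin 2) ℂ)
    (hX1 : X1 = !![0,β;0,0]) (hX2 : X2 = !![μ,0;0,-μ]) (hX3 : X3 = !![0,0;γ,0])
    (hA : A = !![a1,b1;c1,-a1]) (hB : B = !![a2,b2;c2,-a2]) (hC : C = !![a3,b3;c3,-a3])
    (hD : D = !![a4,b4;c4,-a4]) (hE : E = !![a5,b5;c5,-a5]) :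
    (X1 * (X1*E - E*X1 + (X2*D - D*X2) + (X3*C - C*X3))
       - (X1*E - E*X1 + (X2*D - D*X2) + (X3*C - C*X3)) * X1)
    + (X2 * (X1*D - D*X1 + (X2*C - C*X2) + (X3*B - B*X3))
       - (X1*D - D*X1 + (X2*C - C*X2) + (X3*B - B*X3)) * X2)
    + (X3 * (X1*C - C*X1 + (X2*B - B*X2) + (X3*A - A*X3))
       - (X1*C - C*X1 + (X2*B - B*X2) + (X3*A - A*X3)) * X3)
    = ((-4)*αc^2) • C + (-2 : ℂ) • (
        (((X1*E).trace + (X2*D).trace + (X3*C).trace) • X1)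
      + (((X1*D).trace + (X2*C).trace + (X3*B).trace) • X2)
      + (((X1*C).trace + (X2*B).trace + (X3*A).trace) • X3)) := by
  subst hX1 hX2 hX3 hA hB hC hD hE
  ext i j
  fin_cases i <;> fin_cases j <;>
      simp [Matrix.mul_apply, Fin.sum_univ_two, Matrix.trace_fin_two, smul_eq_mul]
  · linear_combination (4*a3) * hrel
  · linear_combination (4*b3) * hrel
  · linear_combination (4*c3) * hrel
  · linear_combination (-4*a3) * hrel

lemma XXm1_eq (α : ℝ) (β : ℂ) : XX α β (-1) = !![0, β; 0, 0] := by
  norm_num [XX]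

lemma XX0_eq (α : ℝ) (β : ℂ) :
    XX α β 0 = !![Complex.I * ((Real.sqrt (α ^ 2 + Complex.normSq β) : ℝ) : ℂ), 0;
       0, -(Complex.I * ((Real.sqrt (α ^ 2 + Complex.normSq β) : ℝ) : ℂ))] := by
  norm_num [XX]

lemma XX1_eq (α : ℝ) (β : ℂ) : XX α β 1 = !![0, 0; conj β, 0] := by
  norm_num [XX]

lemma mu_rel (α : ℝ) (β : ℂ) :
    (Complex.I * ((Real.sqrt (α ^ 2 + Complex.normSq β) : ℝ) : ℂ))^2
      = -((α:ℂ)^2 + β * conj β) := by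
  have h1 : ((Real.sqrt (α ^ 2 + Complex.normSq β) : ℝ) : ℂ)^2
      = (α:ℂ)^2 + (Complex.normSq β : ℂ) := by
    rw [← Complex.ofReal_pow, Real.sq_sqrt (add_nonneg (sq_nonneg α) (Complex.normSq_nonneg β))]
    push_cast
    ring
  rw [mul_pow, Complex.I_sq, h1, Complex.mul_conj]
  ring

/-- Eta-expansion of a traceless 2×2 matrix. -/
lemma eta_traceless (A : Matrix (Fin 2) (Fin 2) ℂ) (hA : A.trace = 0) :
    A = !![A 0 0, A 0 1; A 1 0, -(A 0 0)] := by
  rw [Matrix.trace_fin_two] at hA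
  conv_lhs => rw [Matrix.eta_fin_two A]
  rw [show A 1 1 = -(A 0 0) by linear_combination hA]

/-- `ad_𝔛²` on traceless sequences: `[𝔛,[𝔛,Y]]_k = -4α²·Y_k - 2·(tr(𝔛Y)·𝔛)_k`. -/
lemma brbr (α : ℝ) (β : ℂ) (Y : ℤ → Matrix (Fin 2) (Fin 2) ℂ)
    (hY : ∀ k, (Y k).trace = 0) (k : ℤ) :
    brX α β (brX α β Y) k
      = ((-4)*(α:ℂ)^2) • Y k + (-2 : ℂ) • (
          Tr α β Y (k+1) • XX α β (-1) + Tr α β Y k • XX α β 0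
            + Tr α β Y (k-1) • XX α β 1) := by
  simp only [brX, Tr]
  rw [show k+1+1 = k+2 by ring, show k+1-1 = k by ring, show k-1+1 = k by ring,
    show k-1-1 = k-2 by ring]
  exact matkey (α:ℂ) β (conj β) (Complex.I * ((Real.sqrt (α ^ 2 + Complex.normSq β) : ℝ) : ℂ))
    (mu_rel α β)
    (Y (k-2) 0 0) (Y (k-2) 0 1) (Y (k-2) 1 0)
    (Y (k-1) 0 0) (Y (k-1) 0 1) (Y (k-1) 1 0)
    (Y k 0 0) (Y k 0 1) (Y k 1 0)
    (Y (k+1) 0 0) (Y (k+1) 0 1) (Y (k+1) 1 0)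
    (Y (k+2) 0 0) (Y (k+2) 0 1) (Y (k+2) 1 0)
    _ _ _ _ _ _ _ _
    (XXm1_eq α β) (XX0_eq α β) (XX1_eq α β)
    (eta_traceless _ (hY (k-2))) (eta_traceless _ (hY (k-1))) (eta_traceless _ (hY k))
    (eta_traceless _ (hY (k+1))) (eta_traceless _ (hY (k+2)))

lemma norm_mul_le2 (A B : Matrix (Fin 2) (Fin 2) ℂ) : ‖A * B‖ ≤ 2*‖A‖*‖B‖ := by
  rw [Matrix.norm_le_iff (by positivity)]
  intro i j
  rw [Matrix.mul_apply]
  calc ‖∑ l, A i l * B l j‖ ≤ ∑ l, ‖A i l * B l j‖ := norm_sum_le _ _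
    _ = ‖A i 0 * B 0 j‖ + ‖A i 1 * B 1 j‖ := by rw [Fin.sum_univ_two]
    _ ≤ ‖A‖*‖B‖ + ‖A‖*‖B‖ := by
        refine add_le_add ?_ ?_ <;> rw [norm_mul] <;>
          exact mul_le_mul (Matrix.norm_entry_le_entrywise_sup_norm A)
            (Matrix.norm_entry_le_entrywise_sup_norm B) (norm_nonneg _) (norm_nonneg _)
    _ = 2*‖A‖*‖B‖ := by ring

lemma norm_trace_mul_le (A B : Matrix (Fin 2) (Fin 2) ℂ) :
    ‖(A * B).trace‖ ≤ 4*‖A‖*‖B‖ := by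
  have hb : ∀ (i j i' j' : Fin 2), ‖A i j * B i' j'‖ ≤ ‖A‖*‖B‖ := fun i j i' j' => by
    rw [norm_mul]
    exact mul_le_mul (Matrix.norm_entry_le_entrywise_sup_norm A)
      (Matrix.norm_entry_le_entrywise_sup_norm B) (norm_nonneg _) (norm_nonneg _)
  have h : (A * B).trace
      = A 0 0 * B 0 0 + A 0 1 * B 1 0 + (A 1 0 * B 0 1 + A 1 1 * B 1 1) := by
    simp [Matrix.trace_fin_two, Matrix.mul_apply, Fin.sum_univ_two]
  rw [h]
  have h1 := norm_add_le (A 0 0 * B 0 0 + A 0 1 * B 1 0) (A 1 0 * B 0 1 + A 1 1 * B 1 1)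
  have h2 := norm_add_le (A 0 0 * B 0 0) (A 0 1 * B 1 0)
  have h3 := norm_add_le (A 1 0 * B 0 1) (A 1 1 * B 1 1)
  have := hb 0 0 0 0
  have := hb 0 1 1 0
  have := hb 1 0 0 1
  have := hb 1 1 1 1
  linarith

/-- Sum of the norms of the three coefficients of `𝔛`. -/
def cX (α : ℝ) (β : ℂ) : ℝ := ‖XX α β (-1)‖ + ‖XX α β 0‖ + ‖XX α β 1‖

lemma brX_norm_le (α : ℝ) (β : ℂ) (Y : ℤ → Matrix (Fin 2) (Fin 2) ℂ) (k : ℤ) :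
    ‖brX α β Y k‖ ≤ 4*(cX α β)*(‖Y (k+1)‖ + ‖Y k‖ + ‖Y (k-1)‖) := by
  have key : ∀ (X M : Matrix (Fin 2) (Fin 2) ℂ), ‖X * M - M * X‖ ≤ 4*‖X‖*‖M‖ := by
    intro X M
    calc ‖X * M - M * X‖ ≤ ‖X * M‖ + ‖M * X‖ := norm_sub_le _ _
      _ ≤ 2*‖X‖*‖M‖ + 2*‖M‖*‖X‖ := add_le_add (norm_mul_le2 _ _) (norm_mul_le2 _ _)
      _ = 4*‖X‖*‖M‖ := by ring
  have h1 := key (XX α β (-1)) (Y (k+1))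
  have h2 := key (XX α β 0) (Y k)
  have h3 := key (XX α β 1) (Y (k-1))
  have n1 : (0:ℝ) ≤ ‖XX α β (-1)‖ := norm_nonneg _
  have n2 : (0:ℝ) ≤ ‖XX α β 0‖ := norm_nonneg _
  have n3 : (0:ℝ) ≤ ‖XX α β 1‖ := norm_nonneg _
  have m1 : (0:ℝ) ≤ ‖Y (k+1)‖ := norm_nonneg _
  have m2 : (0:ℝ) ≤ ‖Y k‖ := norm_nonneg _
  have m3 : (0:ℝ) ≤ ‖Y (k-1)‖ := norm_nonneg _
  calc ‖brX α β Y k‖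
      ≤ ‖(XX α β (-1) * Y (k+1) - Y (k+1) * XX α β (-1))
            + (XX α β 0 * Y k - Y k * XX α β 0)‖
          + ‖XX α β 1 * Y (k-1) - Y (k-1) * XX α β 1‖ := norm_add_le _ _
    _ ≤ ‖XX α β (-1) * Y (k+1) - Y (k+1) * XX α β (-1)‖
          + ‖XX α β 0 * Y k - Y k * XX α β 0‖
          + ‖XX α β 1 * Y (k-1) - Y (k-1) * XX α β 1‖ := by
        have := norm_add_le (XX α β (-1) * Y (k+1) - Y (k+1) * XX α β (-1))
          (XX α β 0 * Y k - Y k * XX α β 0)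
        linarith
    _ ≤ 4*(cX α β)*(‖Y (k+1)‖ + ‖Y k‖ + ‖Y (k-1)‖) := by
        unfold cX
        nlinarith

lemma Tr_norm_le (α : ℝ) (β : ℂ) (Y : ℤ → Matrix (Fin 2) (Fin 2) ℂ) (m : ℤ) :
    ‖Tr α β Y m‖ ≤ 4*(cX α β)*(‖Y (m+1)‖ + ‖Y m‖ + ‖Y (m-1)‖) := by
  have h1 := norm_trace_mul_le (XX α β (-1)) (Y (m+1))
  have h2 := norm_trace_mul_le (XX α β 0) (Y m)
  have h3 := norm_trace_mul_le (XX α β 1) (Y (m-1))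
  have hs : ‖Tr α β Y m‖ ≤ ‖(XX α β (-1) * Y (m+1)).trace‖ + ‖(XX α β 0 * Y m).trace‖
      + ‖(XX α β 1 * Y (m-1)).trace‖ := by
    unfold Tr
    have := norm_add_le ((XX α β (-1) * Y (m+1)).trace + (XX α β 0 * Y m).trace)
      ((XX α β 1 * Y (m-1)).trace)
    have := norm_add_le ((XX α β (-1) * Y (m+1)).trace) ((XX α β 0 * Y m).trace)
    linarith
  have n1 : (0:ℝ) ≤ ‖XX α β (-1)‖ := norm_nonneg _
  have n2 : (0:ℝ) ≤ ‖XX α β 0‖ := norm_nonneg _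
  have n3 : (0:ℝ) ≤ ‖XX α β 1‖ := norm_nonneg _
  have m1 : (0:ℝ) ≤ ‖Y (m+1)‖ := norm_nonneg _
  have m2 : (0:ℝ) ≤ ‖Y m‖ := norm_nonneg _
  have m3 : (0:ℝ) ≤ ‖Y (m-1)‖ := norm_nonneg _
  unfold cX
  nlinarith

lemma summable_three (Y : ℤ → Matrix (Fin 2) (Fin 2) ℂ)
    (hY : Summable fun k => ‖Y k‖) :
    Summable (fun k : ℤ => ‖Y (k+1)‖ + ‖Y k‖ + ‖Y (k-1)‖) := by
  have h1 : Summable (fun k : ℤ => ‖Y (k+1)‖) :=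
    ((Equiv.addRight (1:ℤ)).summable_iff (f := fun k => ‖Y k‖)).mpr hY
  have h3 : Summable (fun k : ℤ => ‖Y (k-1)‖) :=
    ((Equiv.subRight (1:ℤ)).summable_iff (f := fun k => ‖Y k‖)).mpr hY
  exact (h1.add hY).add h3

lemma tsum_three (Y : ℤ → Matrix (Fin 2) (Fin 2) ℂ)
    (hY : Summable fun k => ‖Y k‖) :
    ∑' k : ℤ, (‖Y (k+1)‖ + ‖Y k‖ + ‖Y (k-1)‖) = 3 * ∑' k, ‖Y k‖ := by
  have h1 : Summable (fun k : ℤ => ‖Y (k+1)‖) :=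
    ((Equiv.addRight (1:ℤ)).summable_iff (f := fun k => ‖Y k‖)).mpr hY
  have h3 : Summable (fun k : ℤ => ‖Y (k-1)‖) :=
    ((Equiv.subRight (1:ℤ)).summable_iff (f := fun k => ‖Y k‖)).mpr hY
  have e1 : ∑' k : ℤ, ‖Y (k+1)‖ = ∑' k, ‖Y k‖ :=
    (Equiv.addRight (1:ℤ)).tsum_eq (fun k => ‖Y k‖)
  have e3 : ∑' k : ℤ, ‖Y (k-1)‖ = ∑' k, ‖Y k‖ :=
    (Equiv.subRight (1:ℤ)).tsum_eq (fun k => ‖Y k‖)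
  rw [Summable.tsum_add (h1.add hY) h3, Summable.tsum_add h1 hY, e1, e3]
  ring

/-- trace of each coefficient of the bracket vanishes. -/
lemma brX_trace (α : ℝ) (β : ℂ) (Y : ℤ → Matrix (Fin 2) (Fin 2) ℂ) (k : ℤ) :
    (brX α β Y k).trace = 0 := by
  simp [brX, Matrix.trace_add, Matrix.trace_sub, Matrix.trace_mul_comm (XX α β (-1)),
    Matrix.trace_mul_comm (XX α β 0), Matrix.trace_mul_comm (XX α β 1)]

/-- `brX` commutes with scalar rescaling of the sequence. -/
lemma brX_smul (α : ℝ) (β : ℂ) (c : ℂ) (Y : ℤ → Matrix (Fin 2) (Fin 2) ℂ) (k : ℤ) :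
    brX α β (fun m => c • Y m) k = c • brX α β Y k := by
  simp [brX, mul_smul_comm, smul_mul_assoc, smul_sub, smul_add]

lemma brX_sub (α : ℝ) (β : ℂ) (U V : ℤ → Matrix (Fin 2) (Fin 2) ℂ) (k : ℤ) :
    brX α β (fun m => U m - V m) k = brX α β U k - brX α β V k := by
  simp only [brX, mul_sub, sub_mul]
  abel

lemma brX_add (α : ℝ) (β : ℂ) (U V : ℤ → Matrix (Fin 2) (Fin 2) ℂ) (k : ℤ) :
    brX α β (fun m => U m + V m) k = brX α β U k + brX α β V k := by
  simp only [brX, mul_add, add_mul]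
  abel

/-- The solution operator. -/
def solX (α : ℝ) (β : ℂ) (Y : ℤ → Matrix (Fin 2) (Fin 2) ℂ) :
    ℤ → Matrix (Fin 2) (Fin 2) ℂ :=
  fun k => (-(1/(4*(α:ℂ)^2))) • brX α β Y k

lemma solX_memL (α : ℝ) (hα : 0 < α) (β : ℂ) (Y : ℤ → Matrix (Fin 2) (Fin 2) ℂ)
    (hm : memL Y) : memL (solX α β Y) := by
  constructor
  · apply Summable.of_nonneg_of_le (fun k => norm_nonneg _)
      (f := fun k => ‖(-(1/(4*(α:ℂ)^2)))‖ * (4*(cX α β)*(‖Y (k+1)‖ + ‖Y k‖ + ‖Y (k-1)‖)))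
    · intro k
      rw [solX, norm_smul]
      exact mul_le_mul_of_nonneg_left (brX_norm_le α β Y k) (norm_nonneg _)
    · exact Summable.mul_left _ ((summable_three Y hm.1).mul_left _)
  · intro k
    rw [solX, Matrix.trace_smul, brX_trace, smul_zero]

lemma solX_solves (α : ℝ) (hα : 0 < α) (β : ℂ) (Y : ℤ → Matrix (Fin 2) (Fin 2) ℂ)
    (hm : memL Y) (hK : Kcond α β Y) : brX α β (solX α β Y) = Y := by
  funext k
  have hαc : (α:ℂ) ≠ 0 := by exact_mod_cast hα.ne'
  have hs : brX α β (solX α β Y) k = (-(1/(4*(α:ℂ)^2))) • brX α β (brX α β Y) k :=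
    brX_smul α β _ _ k
  rw [hs, brbr α β Y hm.2 k, show Tr α β Y (k+1) = 0 from hK (k+1),
    show Tr α β Y k = 0 from hK k, show Tr α β Y (k-1) = 0 from hK (k-1)]
  simp only [zero_smul, add_zero, smul_zero, smul_smul]
  rw [show (-(1/(4*(α:ℂ)^2))) * ((-4)*(α:ℂ)^2) = 1 by field_simp, one_smul]

/-- For every `Y ∈ K_𝔛` there exists `Ŷ ∈ Λ` with `[𝔛, Ŷ] = Y`; `Ŷ` is unique up to
adding `f·𝔛` for a summable scalar sequence `f` (acting by convolution), and the
assignment `Y ↦ Ŷ` can be chosen to be a continuous linear map. -/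
theorem stmt13 (α : ℝ) (hα : 0 < α) (β : ℂ) :
    -- existence
    (∀ Y, memL Y → Kcond α β Y → ∃ Yhat, memL Yhat ∧ brX α β Yhat = Y) ∧
    -- uniqueness up to f·𝔛
    (∀ Y Yhat Yhat', memL Y → Kcond α β Y →
      memL Yhat → memL Yhat' → brX α β Yhat = Y → brX α β Yhat' = Y →
      ∃ f : ℤ → ℂ, Summable (fun k => ‖f k‖) ∧
        ∀ k : ℤ, Yhat' k - Yhat k
          = f (k + 1) • XX α β (-1) + f k • XX α β 0 + f (k - 1) • XX α β 1) ∧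
    -- a continuous linear choice of solution operator
    (∃ sol : (ℤ → Matrix (Fin 2) (Fin 2) ℂ) → (ℤ → Matrix (Fin 2) (Fin 2) ℂ),
      (∀ Y, memL Y → Kcond α β Y → memL (sol Y) ∧ brX α β (sol Y) = Y) ∧
      (∀ Y Z, memL Y → Kcond α β Y → memL Z → Kcond α β Z → sol (Y + Z) = sol Y + sol Z) ∧
      (∀ (c : ℂ) (Y), memL Y → Kcond α β Y → sol (fun k => c • Y k) = fun k => c • sol Y k) ∧
      ∃ C : ℝ, 0 < C ∧ ∀ Y, memL Y → Kcond α β Y →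
        (∑' k, ‖sol Y k‖) ≤ C * ∑' k, ‖Y k‖) := by
  have hαc : (α:ℂ) ≠ 0 := by exact_mod_cast hα.ne'
  refine ⟨?_, ?_, ?_⟩
  · -- existence
    intro Y hm hK
    exact ⟨solX α β Y, solX_memL α hα β Y hm, solX_solves α hα β Y hm hK⟩
  · -- uniqueness
    intro Y Yhat Yhat' hmY hK hm hm' hb hb'
    set D : ℤ → Matrix (Fin 2) (Fin 2) ℂ := fun k => Yhat' k - Yhat k with hD
    have hDtr : ∀ k, (D k).trace = 0 := by
      intro k
      rw [hD]
      simp [Matrix.trace_sub, hm.2 k, hm'.2 k]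
    have hD0 : brX α β D = fun _ => 0 := by
      funext k
      rw [hD, brX_sub α β Yhat' Yhat k, hb, hb', sub_self]
    have hDsum : Summable fun k => ‖D k‖ := by
      apply Summable.of_nonneg_of_le (fun k => norm_nonneg _)
        (f := fun k => ‖Yhat' k‖ + ‖Yhat k‖)
      · intro k
        exact norm_sub_le _ _
      · exact hm'.1.add hm.1
    refine ⟨fun m => (-(1/(2*(α:ℂ)^2))) * Tr α β D m, ?_, ?_⟩
    · apply Summable.of_nonneg_of_le (fun k => norm_nonneg _)
        (f := fun m => ‖(-(1/(2*(α:ℂ)^2)))‖ * (4*(cX α β)*(‖D (m+1)‖ + ‖D m‖ + ‖D (m-1)‖)))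
      · intro m
        rw [norm_mul]
        exact mul_le_mul_of_nonneg_left (Tr_norm_le α β D m) (norm_nonneg _)
      · exact Summable.mul_left _ ((summable_three D hDsum).mul_left _)
    · intro k
      have h0 : ((-4)*(α:ℂ)^2) • D k + (-2 : ℂ) • (
          Tr α β D (k+1) • XX α β (-1) + Tr α β D k • XX α β 0
            + Tr α β D (k-1) • XX α β 1) = 0 := by
        rw [← brbr α β D hDtr k, hD0]
        simp [brX]
      have goal' : D k = ((-(1/(2*(α:ℂ)^2))) * Tr α β D (k+1)) • XX α β (-1)
          + ((-(1/(2*(α:ℂ)^2))) * Tr α β D k) • XX α β 0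
          + ((-(1/(2*(α:ℂ)^2))) * Tr α β D (k-1)) • XX α β 1 := by
        rw [← sub_eq_zero]
        have hrw : D k - (((-(1/(2*(α:ℂ)^2))) * Tr α β D (k+1)) • XX α β (-1)
            + ((-(1/(2*(α:ℂ)^2))) * Tr α β D k) • XX α β 0
            + ((-(1/(2*(α:ℂ)^2))) * Tr α β D (k-1)) • XX α β 1)
            = (-(1/(4*(α:ℂ)^2))) • (((-4)*(α:ℂ)^2) • D k + (-2 : ℂ) • (
              Tr α β D (k+1) • XX α β (-1) + Tr α β D k • XX α β 0
                + Tr α β D (k-1) • XX α β 1)) := by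
          match_scalars <;> field_simp <;> ring
        rw [hrw, h0, smul_zero]
      exact goal'
  · -- continuous linear solution operator
    refine ⟨solX α β, fun Y hm hK => ⟨solX_memL α hα β Y hm, solX_solves α hα β Y hm hK⟩,
      ?_, ?_, ?_⟩
    · intro Y Z _ _ _ _
      funext k
      have : brX α β (Y + Z) k = brX α β Y k + brX α β Z k := brX_add α β Y Z k
      simp only [solX, Pi.add_apply, this, smul_add]
    · intro c Y _ _
      funext k
      simp only [solX, brX_smul α β c Y k, smul_smul, mul_comm]
    · have hcx : (0:ℝ) ≤ cX α β :=
        add_nonneg (add_nonneg (norm_nonneg _) (norm_nonneg _)) (norm_nonneg _)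
      have hc0 : (0:ℝ) ≤ ‖(-(1/(4*(α:ℂ)^2)))‖ * (4*(cX α β)) :=
        mul_nonneg (norm_nonneg _) (by linarith)
      refine ⟨3 * (‖(-(1/(4*(α:ℂ)^2)))‖ * (4*(cX α β))) + 1, by linarith, ?_⟩
      intro Y hm _
      have hle : ∀ k, ‖solX α β Y k‖
          ≤ ‖(-(1/(4*(α:ℂ)^2)))‖ * (4*(cX α β)*(‖Y (k+1)‖ + ‖Y k‖ + ‖Y (k-1)‖)) := by
        intro k
        rw [solX, norm_smul]
        exact mul_le_mul_of_nonneg_left (brX_norm_le α β Y k) (norm_nonneg _)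
      have hsum1 : Summable fun k => ‖solX α β Y k‖ := (solX_memL α hα β Y hm).1
      have hsum2 : Summable (fun k : ℤ =>
          ‖(-(1/(4*(α:ℂ)^2)))‖ * (4*(cX α β)*(‖Y (k+1)‖ + ‖Y k‖ + ‖Y (k-1)‖))) :=
        Summable.mul_left _ ((summable_three Y hm.1).mul_left _)
      have hS : (0:ℝ) ≤ ∑' k, ‖Y k‖ := tsum_nonneg (fun k => norm_nonneg _)
      calc ∑' k, ‖solX α β Y k‖
          ≤ ∑' k : ℤ, ‖(-(1/(4*(α:ℂ)^2)))‖ * (4*(cX α β)*(‖Y (k+1)‖ + ‖Y k‖ + ‖Y (k-1)‖)) :=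
            Summable.tsum_le_tsum hle hsum1 hsum2
        _ = ‖(-(1/(4*(α:ℂ)^2)))‖ * (4*(cX α β)
              * ∑' k : ℤ, (‖Y (k+1)‖ + ‖Y k‖ + ‖Y (k-1)‖)) := by
            rw [tsum_mul_left, tsum_mul_left]
        _ = 3 * (‖(-(1/(4*(α:ℂ)^2)))‖ * (4*(cX α β))) * ∑' k, ‖Y k‖ := by
            rw [tsum_three Y hm.1]
            ring
        _ ≤ (3 * (‖(-(1/(4*(α:ℂ)^2)))‖ * (4*(cX α β))) + 1) * ∑' k, ‖Y k‖ := by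
            apply mul_le_mul_of_nonneg_right _ hS
            linarith
end
end
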